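/- arXiv:2009.00738 — 4 statements merged into one kernel-verified Lean document; each statement's English description precedes it below -/
import Mathlib

section
/- Let H_m be a nonempty set of histories, Choice^m_α a finite nonempty partition of H_m into nonempty actions, Value : H_m → ℝ, and State^m_α a collection of subsets of H_m such that K ∩ S is nonempty for every action K ∈ Choice^m_α and every S ∈ State^m_α. Then the set Optimal^m_α of undominated actions is nonempty; that is, there exists an action K ∈ Choice^m_α such that no K' ∈ Choice^m_α satisfies K ≺ K'. -/
/-- `X ≤ Y` iff every history in `X` has value at most that of every history in `Y`. -/
def setLE {H : Type*} (Value : H → ℝ) (X Y : Set H) : Prop :=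
  ∀ h ∈ X, ∀ h' ∈ Y, Value h ≤ Value h'

/-- Weak dominance: `K ⪯ K'` iff `K ∩ S ≤ K' ∩ S` for every background state `S`. -/
def weakDom {H : Type*} (Value : H → ℝ) (State : Set (Set H)) (K K' : Set H) : Prop :=
  ∀ S ∈ State, setLE Value (K ∩ S) (K' ∩ S)

/-- Strict dominance: `K ≺ K'` iff `K ⪯ K'` and not `K' ⪯ K`. -/
def strictDom {H : Type*} (Value : H → ℝ) (State : Set (Set H)) (K K' : Set H) : Prop :=
  weakDom Value State K K' ∧ ¬ weakDom Value State K' K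

/-- The optimal (undominated) actions among `Choice`. -/
def Optimal {H : Type*} (Value : H → ℝ) (State : Set (Set H))
    (Choice : Set (Set H)) : Set (Set H) :=
  {K ∈ Choice | ¬ ∃ K' ∈ Choice, strictDom Value State K K'}

/-- `Choice` is a partition of the histories into nonempty actions. -/
def IsChoicePartition {H : Type*} (Choice : Set (Set H)) : Prop :=
  (∀ K ∈ Choice, K.Nonempty) ∧
  (∀ K ∈ Choice, ∀ K' ∈ Choice, K ≠ K' → Disjoint K K') ∧
  ⋃₀ Choice = Set.univ

lemma finset_max_aux {α : Type*} (r : α → α → Prop) (s : Finset α)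
    (htr : ∀ a ∈ s, ∀ b ∈ s, ∀ c ∈ s, r a b → r b c → r a c)
    (hirr : ∀ a ∈ s, ¬ r a a) (hne : s.Nonempty) :
    ∃ a ∈ s, ∀ b ∈ s, ¬ r a b := by
  classical
  induction s using Finset.induction_on with
  | empty => exact absurd hne (by simp)
  | @insert x s hx ih =>
    rcases s.eq_empty_or_nonempty with rfl | hsne
    · exact ⟨x, by simp, by simpa using hirr x (by simp)⟩
    · obtain ⟨a, ha, hamax⟩ := ih
        (fun a ha b hb c hc => htr a (by simp [ha]) b (by simp [hb]) c (by simp [hc]))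
        (fun a ha => hirr a (by simp [ha])) hsne
      by_cases hax : r a x
      · refine ⟨x, by simp, ?_⟩
        intro b hb hrxb
        rcases Finset.mem_insert.mp hb with rfl | hb
        · exact hirr b hb hrxb
        · exact hamax b hb (htr a (by simp [ha]) x (by simp) b (by simp [hb]) hax hrxb)
      · refine ⟨a, by simp [ha], ?_⟩
        intro b hb
        rcases Finset.mem_insert.mp hb with rfl | hb
        · exact hax
        · exact hamax b hb

/-- In a finite-choice utilitarian stit model (with every `K ∩ S` nonempty),
the set of optimal actions is nonempty. -/
theorem optimal_nonempty {H : Type*} [Nonempty H]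
    (Choice : Set (Set H)) (hfin : Choice.Finite) (hne : Choice.Nonempty)
    (hpart : IsChoicePartition Choice)
    (Value : H → ℝ) (State : Set (Set H))
    (hint : ∀ K ∈ Choice, ∀ S ∈ State, (K ∩ S).Nonempty) :
    ∃ K ∈ Choice, ¬ ∃ K' ∈ Choice, strictDom Value State K K' := by
  classical
  have wtrans : ∀ K K' K'' : Set H, (∀ S ∈ State, (K' ∩ S).Nonempty) →
      weakDom Value State K K' → weakDom Value State K' K'' →
      weakDom Value State K K'' := by
    intro K K' K'' hmid h1 h2 S hS h hh h' hh'
    obtain ⟨m, hm⟩ := hmid S hS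
    exact le_trans (h1 S hS h hh m hm) (h2 S hS m hm h' hh')
  set r : Set H → Set H → Prop := strictDom Value State with hr
  have htr : ∀ K ∈ hfin.toFinset, ∀ K' ∈ hfin.toFinset, ∀ K'' ∈ hfin.toFinset,
      r K K' → r K' K'' → r K K'' := by
    intro K hK K' hK' K'' hK'' h1 h2
    simp only [Set.Finite.mem_toFinset] at hK hK' hK''
    refine ⟨wtrans K K' K'' (hint K' hK') h1.1 h2.1, ?_⟩
    intro hcontra
    exact h2.2 (wtrans K'' K K' (hint K hK) hcontra h1.1)
  have hirr : ∀ K ∈ hfin.toFinset, ¬ r K K := fun K _ h => h.2 h.1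
  obtain ⟨K, hK, hmax⟩ := finset_max_aux r hfin.toFinset htr hirr
    (by simpa using hne)
  refine ⟨K, by simpa using hK, ?_⟩
  rintro ⟨K', hK', hd⟩
  exact hmax K' (hfin.mem_toFinset.mpr hK') hd
end

section
/- Let H be a nonempty set and Choice a partition of H into nonempty cells. For A ⊆ H, define the deliberative stit set D(A) = {h ∈ H : the cell of the partition containing h is a subset of A, and A ≠ H}. Then refraining from refraining is the same as doing: for every A ⊆ H, D(H \ D(H \ D(A))) = D(A). (This is the semantic form of the equivalence [α dstit: ¬[α dstit: ¬[α dstit: A]]] ≡ [α dstit: A].) -/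
/-- The deliberative stit set `D(A)`: histories `h` whose choice cell is contained
in `A`, provided `A` is not the whole set of histories. -/
def Dstit {H : Type*} (Choice : Set (Set H)) (A : Set H) : Set H :=
  {h | (∃ K ∈ Choice, h ∈ K ∧ K ⊆ A) ∧ A ≠ Set.univ}

lemma Dstit_univ {H : Type*} (Choice : Set (Set H)) : Dstit Choice Set.univ = ∅ := by
  simp [Dstit]

lemma Dstit_subset {H : Type*} (Choice : Set (Set H)) (A : Set H) :
    Dstit Choice A ⊆ A := by
  rintro h ⟨⟨K, _, hK, hKA⟩, _⟩
  exact hKA hK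

/-- Cells are unique: if h belongs to two cells they coincide. -/
lemma cell_unique {H : Type*} {Choice : Set (Set H)} (hpart : IsChoicePartition Choice)
    {K K' : Set H} (hK : K ∈ Choice) (hK' : K' ∈ Choice) {h : H}
    (h1 : h ∈ K) (h2 : h ∈ K') : K = K' := by
  by_contra hne
  exact Set.disjoint_left.mp (hpart.2.1 K hK K' hK' hne) h1 h2

/-- Refraining from refraining is the same as doing:
`D(H \ D(H \ D(A))) = D(A)`. -/
theorem refrain_refrain_eq_do {H : Type*} [Nonempty H]
    (Choice : Set (Set H)) (hpart : IsChoicePartition Choice) (A : Set H) :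
    Dstit Choice (Set.univ \ Dstit Choice (Set.univ \ Dstit Choice A)) =
      Dstit Choice A := by
  by_cases hA : A = Set.univ
  · subst hA
    simp [Dstit_univ, Dstit]
  set B := Dstit Choice A with hBdef
  by_cases hB : B = ∅
  · rw [hB]
    simp [Dstit_univ, Dstit]
  -- B is nonempty; first D(univ \ B) = univ \ B
  have hBsubA : B ⊆ A := Dstit_subset Choice A
  have hBne_univ : B ≠ Set.univ := fun h => hA (Set.univ_subset_iff.mp (h ▸ hBsubA))
  have hmemB : ∀ {K : Set H}, K ∈ Choice → K ⊆ A → K ⊆ B := by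
    intro K hK hKA k hk
    exact ⟨⟨K, hK, hk, hKA⟩, hA⟩
  have step1 : Dstit Choice (Set.univ \ B) = Set.univ \ B := by
    apply Set.Subset.antisymm (Dstit_subset _ _)
    intro h hh
    have hh' : h ∉ B := hh.2
    obtain ⟨K, hK, hhK⟩ : ∃ K ∈ Choice, h ∈ K := by
      have := hpart.2.2
      have : h ∈ ⋃₀ Choice := this ▸ Set.mem_univ h
      simpa using this
    refine ⟨⟨K, hK, hhK, ?_⟩, ?_⟩
    · intro k hk
      refine ⟨Set.mem_univ k, fun hkB => ?_⟩
      obtain ⟨⟨K', hK', hkK', hK'A⟩, _⟩ := hkB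
      have : K = K' := cell_unique hpart hK hK' hk hkK'
      exact hh' ⟨⟨K, hK, hhK, this ▸ hK'A⟩, hA⟩
    · intro hcon
      obtain ⟨b, hb⟩ := Set.nonempty_iff_ne_empty.mpr hB
      have : b ∈ Set.univ \ B := by rw [hcon]; trivial
      exact this.2 hb
  rw [step1, Set.diff_diff_cancel_left (Set.subset_univ B)]
  -- now D(B) = B
  apply Set.Subset.antisymm (Dstit_subset _ _)
  intro h hh
  obtain ⟨⟨K, hK, hhK, hKA⟩, _⟩ := hh
  exact ⟨⟨K, hK, hhK, hmemB hK hKA⟩, hBne_univ⟩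
end

section
/- Let Q be a type of states with a distinguished initial state q0, Act a type of actions, and Δ ⊆ Q × Act × Q a transition relation. An execution of the automaton T = (Q, q0, Δ) is an infinite sequence of transitions (q_i, a_i, q_{i+1})_{i∈ℕ} with q_0 = q0 and each (q_i, a_i, q_{i+1}) ∈ Δ. Fix an action K ∈ Act and build the automaton T' on the sum type Q ⊕ Q as follows: from a left (renamed-copy) state inl q, for each (q, a, q') ∈ Δ with the restriction that q = q0 implies a = K, put a transition to inl q' if q' ≠ q0 and to inr q0 if q' = q0; from a right state inr q, put a transition (inr q, a, inr q') for each (q, a, q') ∈ Δ. Then the map sending an execution of T' started at inl q0 to the sequence of its actions together with its underlying Q-states (forgetting the inl/inr tag) is a bijection onto the set of executions of T started at q0 whose first action a_0 equals K. -/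
/-- An execution of the automaton `(Q, q0, Δ)` started at `q0`: an infinite
sequence of consecutive transitions `(q_i, a_i, q_{i+1})` with `q_0 = q0`
and each transition in `Δ`. -/
def IsExec {Q Act : Type*} (q0 : Q) (Δ : Set (Q × Act × Q))
    (e : ℕ → Q × Act × Q) : Prop :=
  (e 0).1 = q0 ∧ (∀ i, e i ∈ Δ) ∧ ∀ i, (e i).2.2 = (e (i + 1)).1

/-- The transition relation of the automaton `T'` on `Q ⊕ Q` built from
`T = (Q, q0, Δ)` and the action `K`:
from a left (renamed-copy) state `inl q`, for each `(q, a, q') ∈ Δ` with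
`q = q0 → a = K`, there is a transition to `inl q'` if `q' ≠ q0` and to
`inr q0` if `q' = q0`; from a right state `inr q` there is a transition
`(inr q, a, inr q')` for each `(q, a, q') ∈ Δ`. -/
def DeltaPrime {Q Act : Type*} (q0 : Q) (Δ : Set (Q × Act × Q)) (K : Act) :
    Set ((Q ⊕ Q) × Act × (Q ⊕ Q)) :=
  {t | ∃ q a q', (q, a, q') ∈ Δ ∧
    (((q = q0 → a = K) ∧
      ((q' ≠ q0 ∧ t = (Sum.inl q, a, Sum.inl q')) ∨
       (q' = q0 ∧ t = (Sum.inl q, a, Sum.inr q0)))) ∨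
     t = (Sum.inr q, a, Sum.inr q'))}

/-- Forget the `inl`/`inr` tag of a state of `T'`. -/
def untag {Q : Type*} : Q ⊕ Q → Q := Sum.elim id id

/-- Map an execution of `T'` to the corresponding sequence of transitions of `T`
(same actions, underlying `Q`-states). -/
def forgetTags {Q Act : Type*} (e : ℕ → (Q ⊕ Q) × Act × (Q ⊕ Q)) :
    ℕ → Q × Act × Q :=
  fun i => (untag (e i).1, (e i).2.1, untag (e i).2.2)

open Classical in
/-- Retag: a `Q`-state at position `i` gets tag `inr` iff `q0` has already been
re-entered, i.e. some earlier transition targets `q0`. -/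
noncomputable def tg {Q Act : Type*} (q0 : Q) (e : ℕ → Q × Act × Q)
    (i : ℕ) (q : Q) : Q ⊕ Q :=
  if ∃ j < i, (e j).2.2 = q0 then Sum.inr q else Sum.inl q

noncomputable def tagExec {Q Act : Type*} (q0 : Q) (e : ℕ → Q × Act × Q) :
    ℕ → (Q ⊕ Q) × Act × (Q ⊕ Q) :=
  fun i => (tg q0 e i (e i).1, (e i).2.1, tg q0 e (i + 1) (e i).2.2)

@[simp] lemma untag_inl {Q : Type*} (q : Q) : untag (Sum.inl q) = q := rfl
@[simp] lemma untag_inr {Q : Type*} (q : Q) : untag (Sum.inr q) = q := rfl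
@[simp] lemma untag_tg {Q Act : Type*} (q0 : Q) (e : ℕ → Q × Act × Q)
    (i : ℕ) (q : Q) : untag (tg q0 e i q) = q := by
  unfold tg; split <;> rfl

lemma hit_succ {Q Act : Type*} (q0 : Q) (e : ℕ → Q × Act × Q) (i : ℕ) :
    (∃ j < i + 1, (e j).2.2 = q0) ↔ (∃ j < i, (e j).2.2 = q0) ∨ (e i).2.2 = q0 := by
  constructor
  · rintro ⟨j, hj, hq⟩
    rcases Nat.lt_succ_iff_lt_or_eq.mp hj with h | rfl
    · exact Or.inl ⟨j, h, hq⟩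
    · exact Or.inr hq
  · rintro (⟨j, hj, hq⟩ | hq)
    · exact ⟨j, hj.trans (Nat.lt_succ_self i), hq⟩
    · exact ⟨i, Nat.lt_succ_self i, hq⟩

lemma forget_tag {Q Act : Type*} (q0 : Q) (e : ℕ → Q × Act × Q) :
    forgetTags (tagExec q0 e) = e := by
  funext i
  simp [forgetTags, tagExec]

/-- Key: in an execution of `T'`, the tag of each state is determined: it's
`inr` iff `q0` has been re-entered. -/
lemma tag_determined {Q Act : Type*} (q0 : Q) (Δ : Set (Q × Act × Q)) (K : Act)
    (e : ℕ → (Q ⊕ Q) × Act × (Q ⊕ Q))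
    (he : IsExec (Sum.inl q0) (DeltaPrime q0 Δ K) e) (i : ℕ) :
    (e i).1 = tg q0 (forgetTags e) i (untag (e i).1) := by
  obtain ⟨h0, hΔ, hcons⟩ := he
  induction i with
  | zero =>
    rw [h0]
    unfold tg
    rw [if_neg (by rintro ⟨j, hj, -⟩; exact absurd hj (Nat.not_lt_zero j))]
    rfl
  | succ n ih =>
    have hmem := hΔ n
    obtain ⟨q, a, q', -, hcase⟩ := hmem
    have hstep : (e (n + 1)).1 = (e n).2.2 := (hcons n).symm
    have hPn : forgetTags e n = (untag (e n).1, (e n).2.1, untag (e n).2.2) := rfl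
    rcases hcase with ⟨hK, ⟨hne, heq⟩ | ⟨hq0, heq⟩⟩ | heq
    · -- inl → inl, q' ≠ q0
      have h1 : (e n).1 = Sum.inl q := by rw [heq]
      have h2 : (e n).2.2 = Sum.inl q' := by rw [heq]
      -- from ih, no hit at n
      have hnohit : ¬ ∃ j < n, (forgetTags e j).2.2 = q0 := by
        intro hh
        rw [h1] at ih
        unfold tg at ih
        rw [if_pos hh] at ih
        exact absurd ih (by simp)
      have hnohit' : ¬ ∃ j < n + 1, (forgetTags e j).2.2 = q0 := by
        rw [hit_succ]
        rintro (hh | hh)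
        · exact hnohit hh
        · have : (forgetTags e n).2.2 = q' := by simp [forgetTags, h2]
          rw [this] at hh; exact hne hh
      rw [hstep, h2]
      unfold tg
      rw [if_neg hnohit']
      simp
    · -- inl → inr q0
      have h2 : (e n).2.2 = Sum.inr q0 := by rw [heq]
      have hhit : ∃ j < n + 1, (forgetTags e j).2.2 = q0 := by
        rw [hit_succ]
        exact Or.inr (by simp [forgetTags, h2])
      rw [hstep, h2]
      unfold tg
      rw [if_pos hhit]
      simp
    · -- inr → inr
      have h1 : (e n).1 = Sum.inr q := by rw [heq]
      have h2 : (e n).2.2 = Sum.inr q' := by rw [heq]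
      have hhit : ∃ j < n, (forgetTags e j).2.2 = q0 := by
        by_contra hh
        rw [h1] at ih
        unfold tg at ih
        rw [if_neg hh] at ih
        exact absurd ih (by simp)
      have hhit' : ∃ j < n + 1, (forgetTags e j).2.2 = q0 := by
        rw [hit_succ]; exact Or.inl hhit
      rw [hstep, h2]
      unfold tg
      rw [if_pos hhit']
      simp

lemma tag_forget {Q Act : Type*} (q0 : Q) (Δ : Set (Q × Act × Q)) (K : Act)
    (e : ℕ → (Q ⊕ Q) × Act × (Q ⊕ Q))
    (he : IsExec (Sum.inl q0) (DeltaPrime q0 Δ K) e) :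
    tagExec q0 (forgetTags e) = e := by
  funext i
  have h1 := tag_determined q0 Δ K e he i
  have h2 := tag_determined q0 Δ K e he (i + 1)
  have hstep : (e i).2.2 = (e (i + 1)).1 := he.2.2 i
  refine Prod.ext ?_ (Prod.ext rfl ?_)
  · exact h1.symm
  · show tg q0 (forgetTags e) (i + 1) (forgetTags e i).2.2 = (e i).2.2
    have : (forgetTags e i).2.2 = untag (e (i + 1)).1 := by
      simp [forgetTags, hstep]
    rw [this, hstep, ← h2]

lemma mapsTo {Q Act : Type*} (q0 : Q) (Δ : Set (Q × Act × Q)) (K : Act)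
    (e : ℕ → (Q ⊕ Q) × Act × (Q ⊕ Q))
    (he : IsExec (Sum.inl q0) (DeltaPrime q0 Δ K) e) :
    IsExec q0 Δ (forgetTags e) ∧ (forgetTags e 0).2.1 = K := by
  obtain ⟨h0, hΔ, hcons⟩ := he
  refine ⟨⟨by simp [forgetTags, h0], ?_, fun i => by simp [forgetTags, hcons i]⟩, ?_⟩
  · intro i
    obtain ⟨q, a, q', hq, hcase⟩ := hΔ i
    have : forgetTags e i = (q, a, q') := by
      rcases hcase with ⟨-, ⟨-, heq⟩ | ⟨hq0, heq⟩⟩ | heq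
      · simp [forgetTags, heq]
      · simp [forgetTags, heq, hq0]
      · simp [forgetTags, heq]
    rw [this]; exact hq
  · obtain ⟨q, a, q', hq, hcase⟩ := hΔ 0
    rcases hcase with ⟨hK, ⟨-, heq⟩ | ⟨-, heq⟩⟩ | heq
    · have hq' : Sum.inl q = (Sum.inl q0 : Q ⊕ Q) := by rw [← h0, heq]
      have : q = q0 := by injection hq'
      simp [forgetTags, heq, hK this]
    · have hq' : Sum.inl q = (Sum.inl q0 : Q ⊕ Q) := by rw [← h0, heq]
      have : q = q0 := by injection hq'
      simp [forgetTags, heq, hK this]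
    · exfalso
      have : Sum.inr q = (Sum.inl q0 : Q ⊕ Q) := by rw [← h0, heq]
      simp at this

lemma tagExec_isExec {Q Act : Type*} (q0 : Q) (Δ : Set (Q × Act × Q)) (K : Act)
    (e : ℕ → Q × Act × Q) (he : IsExec q0 Δ e) (hK : (e 0).2.1 = K) :
    IsExec (Sum.inl q0) (DeltaPrime q0 Δ K) (tagExec q0 e) := by
  obtain ⟨h0, hΔ, hcons⟩ := he
  refine ⟨?_, ?_, ?_⟩
  · show tg q0 e 0 (e 0).1 = Sum.inl q0
    unfold tg
    rw [if_neg (by rintro ⟨j, hj, -⟩; exact absurd hj (Nat.not_lt_zero j)), h0]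
  · intro i
    refine ⟨(e i).1, (e i).2.1, (e i).2.2, hΔ i, ?_⟩
    by_cases hhit : ∃ j < i, (e j).2.2 = q0
    · -- tagged inr
      right
      show tagExec q0 e i = _
      unfold tagExec tg
      rw [if_pos hhit, if_pos ((hit_succ q0 e i).mpr (Or.inl hhit))]
    · left
      constructor
      · -- q = q0 → a = K
        intro hq
        match i, hhit with
        | 0, _ => rw [← hK]
        | n + 1, hhit =>
          exfalso
          exact hhit ⟨n, Nat.lt_succ_self n, by rw [hcons n, hq]⟩
      · by_cases hq' : (e i).2.2 = q0
        · right
          refine ⟨hq', ?_⟩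
          show tagExec q0 e i = _
          unfold tagExec tg
          rw [if_neg hhit, if_pos ((hit_succ q0 e i).mpr (Or.inr hq')), hq']
        · left
          refine ⟨hq', ?_⟩
          show tagExec q0 e i = _
          unfold tagExec tg
          rw [if_neg hhit, if_neg (by rw [hit_succ]; rintro (h | h) <;> [exact hhit h; exact hq' h])]
  · intro i
    show tg q0 e (i + 1) (e i).2.2 = tg q0 e (i + 1) (e (i + 1)).1
    rw [hcons i]


/-- The map forgetting the tags is a bijection from the executions of `T'`
started at `inl q0` onto the executions of `T` started at `q0` whose first
action equals `K`. -/
theorem exec_bijection {Q Act : Type*} (q0 : Q) (Δ : Set (Q × Act × Q))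
    (K : Act) :
    Set.BijOn (forgetTags (Q := Q) (Act := Act))
      {e | IsExec (Sum.inl q0) (DeltaPrime q0 Δ K) e}
      {e | IsExec q0 Δ e ∧ (e 0).2.1 = K} := by
  refine ⟨fun e he => mapsTo q0 Δ K e he, ?_, ?_⟩
  · intro a ha b hb hab
    have := tag_forget q0 Δ K a ha
    have hb' := tag_forget q0 Δ K b hb
    rw [← this, ← hb', hab]
  · rintro e ⟨he, hK⟩
    exact ⟨tagExec q0 e, tagExec_isExec q0 Δ K e he hK, forget_tag q0 e⟩
end

section
/- Let R be a binary relation on a type α such that every element has at most one immediate R-predecessor: for all a, b, c, if R b a and R c a then b = c. Let < denote the transitive closure of R. Then the predecessors of any element are linearly ordered: for all m1, m2, m3, if m1 < m3 and m2 < m3, then m1 = m2 or m1 < m2 or m2 < m1. -/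
/-- If every element has at most one immediate `R`-predecessor, then, with `<`
the transitive closure of `R`, the predecessors of any element are linearly
ordered: any two moments below a common moment are equal or comparable. -/
theorem transGen_predecessors_linear {α : Type*} (R : α → α → Prop)
    (huniq : ∀ a b c, R b a → R c a → b = c) :
    ∀ m1 m2 m3, Relation.TransGen R m1 m3 → Relation.TransGen R m2 m3 →
      m1 = m2 ∨ Relation.TransGen R m1 m2 ∨ Relation.TransGen R m2 m1 := by
  intro m1 m2 m3 h1 h2
  induction h2 with
  | single h =>
    rcases (Relation.transGen_iff R m1 _).mp h1 with h' | ⟨b, hb, hbm⟩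
    · exact Or.inl (huniq _ _ _ h' h)
    · right; left
      have := huniq _ _ _ hbm h
      exact this ▸ hb
  | tail hb hr ih =>
    rcases (Relation.transGen_iff R m1 _).mp h1 with h' | ⟨b, hb', hbm⟩
    · right; right
      have := huniq _ _ _ h' hr
      exact this ▸ hb
    · have := huniq _ _ _ hbm hr
      subst this
      exact ih hb'
end
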